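/- Let [q₁,q₂] ⊂ ℝ be a nontrivial compact interval, l > 0, and let φ satisfy property S(l) on [q₁,q₂] with threshold τ_φ ∈ (0,π). Then: (1) φ([q₁,q₂]) ⊂ [q₁,q₂]; and (2) for every D ∈ (0,τ_φ) there exists E ∈ (0,D) such that φ([q₁,q₂]^{l,E,p+1}) ⊂ [q₁,q₂]^{l,E,p} for every positive integer p. -/

import Mathlib

/-- The sector `[q₁,q₂]^{φ,r} = {q₁ + s·e^{iθ} : 0 < s < q₂ − q₁ + r, −φ < θ < φ}`. -/
def sectorAng (q₁ q₂ φ r : ℝ) : Set ℂ :=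
  {z : ℂ | ∃ s θ : ℝ, 0 < s ∧ s < q₂ - q₁ + r ∧ -φ < θ ∧ θ < φ ∧
    z = (q₁ : ℂ) + (s : ℂ) * Complex.exp (θ * Complex.I)}

/-- `[q₁,q₂]^r := [q₁,q₂]^{r,r}`. -/
def sectorR (q₁ q₂ r : ℝ) : Set ℂ := sectorAng q₁ q₂ r r

/-- `[q₁,q₂]^{l,r,n} := [q₁,q₂]^{r·n^{−1/l}}`. -/
noncomputable def sectorN (q₁ q₂ l r : ℝ) (n : ℕ) : Set ℂ :=
  sectorR q₁ q₂ (r * (n : ℝ) ^ (-(1 / l)))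

/-- The real segment `[q₁,q₂]` viewed as a subset of `ℂ`. -/
def realSeg (q₁ q₂ : ℝ) : Set ℂ := (fun t : ℝ => (t : ℂ)) '' Set.Icc q₁ q₂

lemma sectorR_mono (q₁ q₂ : ℝ) {a b : ℝ} (hab : a ≤ b) :
    sectorR q₁ q₂ a ⊆ sectorR q₁ q₂ b := by
  rintro z ⟨s, θ, hs0, hslt, hθ1, hθ2, rfl⟩
  exact ⟨s, θ, hs0, hslt.trans_le (by linarith), by linarith, by linarith, rfl⟩

lemma sector_rep {q₁ q₂ a : ℝ} {z : ℂ} (hz : z ∈ sectorR q₁ q₂ a) :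
    ∃ s θ : ℝ, 0 < s ∧ s < q₂ - q₁ + a ∧ |θ| < a ∧
      ‖z - q₁‖ = s ∧ (z - q₁).im = s * Real.sin θ ∧
      (z - q₁).re = s * Real.cos θ := by
  rcases hz with ⟨s, θ, hs0, hslt, hθ1, hθ2, rfl⟩
  have hw : (q₁ : ℂ) + (s : ℂ) * Complex.exp (θ * Complex.I) - q₁
      = (s : ℂ) * Complex.exp (θ * Complex.I) := by ring
  refine ⟨s, θ, hs0, hslt, abs_lt.2 ⟨by linarith, hθ2⟩, ?_, ?_, ?_⟩
  · rw [hw, norm_mul, Complex.norm_exp_ofReal_mul_I, Complex.norm_real, Real.norm_eq_abs,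
      abs_of_pos hs0, mul_one]
  · rw [hw]
    simp [Complex.mul_im, Complex.exp_ofReal_mul_I_im, Complex.exp_ofReal_mul_I_re]
  · rw [hw]
    simp [Complex.mul_re, Complex.exp_ofReal_mul_I_im, Complex.exp_ofReal_mul_I_re]

lemma mem_sectorR_of_Ioc {q₁ q₂ a t : ℝ} (ht : t ∈ Set.Ioc q₁ q₂) (ha : 0 < a) :
    (t : ℂ) ∈ sectorR q₁ q₂ a := by
  refine ⟨t - q₁, 0, by linarith [ht.1], by linarith [ht.2], by linarith, ha, ?_⟩
  push_cast
  simp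

theorem stmt_6 (q₁ q₂ l r τ : ℝ) (φ : ℂ → ℂ)
    (hq : q₁ < q₂) (hl : 0 < l) (hr : r ∈ Set.Ioo (0:ℝ) Real.pi)
    (hφhol : DifferentiableOn ℂ φ (sectorR q₁ q₂ r))
    (hφC1 : ContDiffOn ℝ 1 (fun t : ℝ => φ t) (Set.Icc q₁ q₂))
    (hτ : τ ∈ Set.Ioo (0:ℝ) Real.pi)
    (hS : ∀ D ∈ Set.Ioc (0:ℝ) τ, ∃ N : ℕ, 0 < N ∧
      ∀ n : ℕ, N ≤ n → φ '' sectorN q₁ q₂ l D (n + 1) ⊆ sectorN q₁ q₂ l D n) :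
    φ '' realSeg q₁ q₂ ⊆ realSeg q₁ q₂ ∧
      ∀ D ∈ Set.Ioo (0:ℝ) τ, ∃ E ∈ Set.Ioo (0:ℝ) D,
        ∀ p : ℕ, 1 ≤ p → φ '' sectorN q₁ q₂ l E (p + 1) ⊆ sectorN q₁ q₂ l E p := by
  obtain ⟨hτ0, hτπ⟩ := hτ
  have hl' : (0:ℝ) < 1 / l := by positivity
  have htend0 : Filter.Tendsto (fun n : ℕ => ((n : ℝ)) ^ (-(1 / l)))
      Filter.atTop (nhds 0) :=
    (tendsto_rpow_neg_atTop hl').comp tendsto_natCast_atTop_atTop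
  have hpow_pos : ∀ n : ℕ, 0 < n → (0:ℝ) < (n : ℝ) ^ (-(1 / l)) := by
    intro n hn
    exact Real.rpow_pos_of_pos (by exact_mod_cast hn) _
  constructor
  · -- part 1
    obtain ⟨N, hN0, hN⟩ := hS τ ⟨hτ0, le_refl τ⟩
    have key : ∀ t ∈ Set.Ioc q₁ q₂, φ t ∈ realSeg q₁ q₂ := by
      intro t ht
      have hmem : ∀ n : ℕ, N ≤ n → φ t ∈ sectorN q₁ q₂ l τ n := by
        intro n hn
        apply hN n hn
        refine ⟨t, ?_, rfl⟩
        refine mem_sectorR_of_Ioc ht ?_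
        have := hpow_pos (n + 1) (Nat.succ_pos n)
        positivity
      set w : ℂ := φ t - q₁ with hwdef
      have habs : ∀ n : ℕ, N ≤ n →
          ‖w‖ < q₂ - q₁ + τ * (n : ℝ) ^ (-(1 / l)) := by
        intro n hn
        obtain ⟨s, θ, hs0, hslt, _, habs, _, _⟩ := sector_rep (hmem n hn)
        rw [hwdef, habs]; exact hslt
      have him : ∀ n : ℕ, N ≤ n →
          |w.im| ≤ ‖w‖ * (τ * (n : ℝ) ^ (-(1 / l))) := by
        intro n hn
        obtain ⟨s, θ, hs0, hslt, hθ, habs, him, _⟩ := sector_rep (hmem n hn)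
        rw [hwdef, him, habs, abs_mul, abs_of_pos hs0]
        exact mul_le_mul_of_nonneg_left ((Real.abs_sin_le_abs).trans hθ.le) hs0.le
      have htend1 : Filter.Tendsto (fun n : ℕ => q₂ - q₁ + τ * (n : ℝ) ^ (-(1 / l)))
          Filter.atTop (nhds (q₂ - q₁)) := by
        have := (htend0.const_mul τ).const_add (q₂ - q₁)
        simpa using this
      have habsle : ‖w‖ ≤ q₂ - q₁ :=
        ge_of_tendsto htend1 (Filter.eventually_atTop.2
          ⟨N, fun n hn => (habs n hn).le⟩)
      have htend2 : Filter.Tendsto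
          (fun n : ℕ => ‖w‖ * (τ * (n : ℝ) ^ (-(1 / l))))
          Filter.atTop (nhds 0) := by
        have := (htend0.const_mul τ).const_mul ‖w‖
        simpa using this
      have him0 : w.im = 0 := by
        have : |w.im| ≤ 0 :=
          ge_of_tendsto htend2 (Filter.eventually_atTop.2 ⟨N, him⟩)
        exact abs_nonpos_iff.1 this
      have hre : 0 < w.re := by
        have hev : ∀ᶠ n : ℕ in Filter.atTop,
            τ * (n : ℝ) ^ (-(1 / l)) < Real.pi / 2 := by
          have h := htend0.const_mul τ
          rw [mul_zero] at h
          exact h.eventually_lt_const (by positivity)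
        obtain ⟨n, hn⟩ := (hev.and (Filter.eventually_ge_atTop N)).exists
        obtain ⟨s, θ, hs0, _, hθ, _, _, hrew⟩ := sector_rep (hmem n hn.2)
        have hθ2 : |θ| < Real.pi / 2 := hθ.trans hn.1
        rw [hwdef, hrew]
        exact mul_pos hs0 (Real.cos_pos_of_mem_Ioo (abs_lt.1 hθ2))
      refine ⟨q₁ + w.re, ⟨le_add_of_nonneg_right hre.le, ?_⟩, ?_⟩
      · have := (Complex.re_le_norm w).trans habsle; linarith
      · have h1 : (φ ↑t).re = q₁ + w.re := by rw [hwdef]; simp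
        have h2 : (φ ↑t).im = 0 := by
          have := him0; rw [hwdef] at this; simpa using this
        apply Complex.ext <;> simp [h1, h2]
    intro z hz
    obtain ⟨w', ⟨t, ht, rfl⟩, rfl⟩ := hz
    rcases eq_or_lt_of_le ht.1 with h | h
    · have hclosed : IsClosed (realSeg q₁ q₂) :=
        (isCompact_Icc.image Complex.continuous_ofReal).isClosed
      have hc : ContinuousWithinAt (fun t : ℝ => φ t) (Set.Ioc q₁ q₂) q₁ :=
        ((hφC1.continuousOn) q₁ (Set.left_mem_Icc.2 hq.le)).mono
          Set.Ioc_subset_Icc_self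
      have hcl : q₁ ∈ closure (Set.Ioc q₁ q₂) := by
        rw [closure_Ioc hq.ne]; exact Set.left_mem_Icc.2 hq.le
      have hmemcl := hc.mem_closure_image hcl
      have hsub : closure ((fun t : ℝ => φ t) '' Set.Ioc q₁ q₂) ⊆ realSeg q₁ q₂ :=
        closure_minimal (by rintro _ ⟨u, hu, rfl⟩; exact key u hu) hclosed
      rw [← h]
      exact hsub hmemcl
    · exact key t ⟨h, ht.2⟩
  · -- part 2
    intro D hD
    obtain ⟨N, hN0, hN⟩ := hS D ⟨hD.1, hD.2.le⟩
    set k : ℕ := N + 1 with hk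
    set E : ℝ := D * (k : ℝ) ^ (-(1 / l)) with hE
    have hk1 : (1:ℝ) < (k : ℝ) := by
      have : 1 ≤ N := hN0
      exact_mod_cast Nat.lt_succ_of_le this
    have hEpos : 0 < E :=
      mul_pos hD.1 (hpow_pos k (Nat.succ_pos N))
    have hElt : E < D := by
      have h1 : (k : ℝ) ^ (-(1 / l)) < 1 :=
        Real.rpow_lt_one_of_one_lt_of_neg hk1 (by linarith)
      calc E = D * (k : ℝ) ^ (-(1 / l)) := rfl
        _ < D * 1 := by
            exact mul_lt_mul_of_pos_left h1 hD.1
        _ = D := mul_one D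
    refine ⟨E, ⟨hEpos, hElt⟩, ?_⟩
    intro p hp
    have hsecteq : ∀ m : ℕ, 0 < m → sectorN q₁ q₂ l E m = sectorN q₁ q₂ l D (k * m) := by
      intro m hm
      unfold sectorN
      congr 1
      rw [hE]
      push_cast
      rw [Real.mul_rpow (by positivity) (by positivity)]
      ring
    have h1 : sectorN q₁ q₂ l E (p + 1) = sectorN q₁ q₂ l D (k * (p + 1)) :=
      hsecteq (p + 1) (Nat.succ_pos p)
    have h2 : sectorN q₁ q₂ l E p = sectorN q₁ q₂ l D (k * p) := hsecteq p hp
    have hmono : sectorN q₁ q₂ l D (k * (p + 1)) ⊆ sectorN q₁ q₂ l D (k * p + 1) := by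
      apply sectorR_mono
      have hle : (k * p + 1 : ℕ) ≤ k * (p + 1) := by
        have : 1 ≤ k := Nat.succ_le_succ (Nat.zero_le N)
        nlinarith [Nat.one_le_iff_ne_zero.2 (Nat.succ_ne_zero N)]
      have hrp : ((k * p + 1 : ℕ) : ℝ) ^ (-(1/l)) ≥ ((k * (p+1) : ℕ) : ℝ) ^ (-(1/l)) := by
        apply Real.rpow_le_rpow_of_nonpos
        · positivity
        · exact_mod_cast hle
        · linarith
      exact mul_le_mul_of_nonneg_left hrp hD.1.le
    rw [h1, h2]
    calc φ '' sectorN q₁ q₂ l D (k * (p + 1))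
        ⊆ φ '' sectorN q₁ q₂ l D (k * p + 1) := Set.image_mono hmono
      _ ⊆ sectorN q₁ q₂ l D (k * p) := hN (k * p) (le_trans (Nat.le_succ N)
          (by calc N + 1 = k := rfl
                _ = k * 1 := (mul_one k).symm
                _ ≤ k * p := Nat.mul_le_mul_left k hp))
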